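/- Suppose the sorted returns form an arithmetic progression r̄_[i] = r̄ − Δr·(i − 1) for i = 1, …, N, where 0 < Δr < r̄/(N − 1). Then for every s* with 2 ≤ s* ≤ N − 1: B₋(s*) = ρ − δ − 1 + s*(s* − 1)(Δr/2 + φ)/(κσ²) and B₊(s*) = ρ − δ − 1 + s*(s* + 1)(Δr/2 + φ)/(κσ²). -/

import Mathlib

open Finset

/-- `v_U(s; δ, φ) = κσ²(1 − ρ + ρs + δ)/s − (Σ_{i=1}^s r̄_[i])/s + φs`. -/
noncomputable def vU (κ σ ρ δ φ : ℝ) (r : ℕ → ℝ) (s : ℕ) : ℝ :=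
  κ * σ ^ 2 * (1 - ρ + ρ * s + δ) / s - (∑ i ∈ Finset.Icc 1 s, r i) / s + φ * s

/-- `B₋(s*) = ρ − δ − 1 − (1/(κσ²)) min_{1 ≤ l < s*}
  ((l Σ_{i≤s*} r̄_[i] − s* Σ_{i≤l} r̄_[i])/(s* − l) − φ s* l)`. -/
noncomputable def Bminus (κ σ ρ δ φ : ℝ) (r : ℕ → ℝ) (sstar : ℕ) : ℝ :=
  ρ - δ - 1 - (1 / (κ * σ ^ 2)) *
    sInf {y : ℝ | ∃ l : ℕ, 1 ≤ l ∧ l < sstar ∧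
      y = ((l : ℝ) * (∑ i ∈ Finset.Icc 1 sstar, r i)
            - (sstar : ℝ) * (∑ i ∈ Finset.Icc 1 l, r i)) / ((sstar : ℝ) - (l : ℝ))
          - φ * (sstar : ℝ) * (l : ℝ)}

/-- `B₊(s*) = ρ − δ − 1 + (1/(κσ²)) min_{s* < l ≤ N}
  ((l Σ_{i≤s*} r̄_[i] − s* Σ_{i≤l} r̄_[i])/(l − s*) + φ s* l)`. -/
noncomputable def Bplus (N : ℕ) (κ σ ρ δ φ : ℝ) (r : ℕ → ℝ) (sstar : ℕ) : ℝ :=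
  ρ - δ - 1 + (1 / (κ * σ ^ 2)) *
    sInf {y : ℝ | ∃ l : ℕ, sstar < l ∧ l ≤ N ∧
      y = ((l : ℝ) * (∑ i ∈ Finset.Icc 1 sstar, r i)
            - (sstar : ℝ) * (∑ i ∈ Finset.Icc 1 l, r i)) / ((l : ℝ) - (sstar : ℝ))
          + φ * (sstar : ℝ) * (l : ℝ)}

/-- Example 2: if the sorted returns form an arithmetic
progression `r̄_[i] = r̄ − Δr (i − 1)` with `0 < Δr < r̄/(N−1)`, then for every
`2 ≤ s* ≤ N−1`:
`B₋(s*) = ρ − δ − 1 + s*(s*−1)(Δr/2 + φ)/(κσ²)` and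
`B₊(s*) = ρ − δ − 1 + s*(s*+1)(Δr/2 + φ)/(κσ²)`. -/
theorem stmt13 (N : ℕ) (hN : 3 ≤ N) (κ σ ρ δ φ rbar Δr : ℝ)
    (hκ : 0 < κ) (hσ : 0 < σ) (hρ1 : -1 < ρ) (hρ2 : ρ < 1) (hδ : 0 ≤ δ) (hφ : 0 < φ)
    (r : ℕ → ℝ)
    (hrAP : ∀ i : ℕ, 1 ≤ i → i ≤ N → r i = rbar - Δr * ((i : ℝ) - 1))
    (hΔr0 : 0 < Δr) (hΔr1 : Δr < rbar / ((N : ℝ) - 1)) :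
    ∀ sstar : ℕ, 2 ≤ sstar → sstar ≤ N - 1 →
      Bminus κ σ ρ δ φ r sstar =
        ρ - δ - 1 + (sstar : ℝ) * ((sstar : ℝ) - 1) * (Δr / 2 + φ) / (κ * σ ^ 2) ∧
      Bplus N κ σ ρ δ φ r sstar =
        ρ - δ - 1 + (sstar : ℝ) * ((sstar : ℝ) + 1) * (Δr / 2 + φ) / (κ * σ ^ 2) := by
  -- sum formula
  have hsum : ∀ s : ℕ, s ≤ N →
      (∑ i ∈ Finset.Icc 1 s, r i) = (s : ℝ) * rbar - Δr * ((s : ℝ) * ((s : ℝ) - 1)) / 2 := by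
    intro s
    induction s with
    | zero => intro _; simp
    | succ n ih =>
      intro hle
      have hn : n ≤ N := Nat.le_of_succ_le hle
      rw [Finset.sum_Icc_succ_top (Nat.one_le_iff_ne_zero.mpr (Nat.succ_ne_zero n)), ih hn,
        hrAP (n+1) (Nat.le_add_left 1 n) hle]
      push_cast
      ring
  have hκσ : κ * σ ^ 2 > 0 := by positivity
  have hκσ' : κ * σ ^ 2 ≠ 0 := ne_of_gt hκσ
  have hc : 0 < Δr / 2 + φ := by linarith
  intro s hs2 hsN
  have hsN' : s + 1 ≤ N := by omega
  have hsNle : s ≤ N := by omega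
  have hs1 : 1 ≤ s := by omega
  -- generic value of y for l ≠ s, l ≤ N
  have hval : ∀ l : ℕ, l ≤ N → l ≠ s →
      ((l : ℝ) * (∑ i ∈ Finset.Icc 1 s, r i) - (s : ℝ) * (∑ i ∈ Finset.Icc 1 l, r i))
        = Δr * (s : ℝ) * (l : ℝ) * ((l : ℝ) - (s : ℝ)) / 2 := by
    intro l hlN _
    rw [hsum s hsNle, hsum l hlN]; ring
  constructor
  · -- Bminus
    have hleast : IsLeast {y : ℝ | ∃ l : ℕ, 1 ≤ l ∧ l < s ∧
        y = ((l : ℝ) * (∑ i ∈ Finset.Icc 1 s, r i)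
              - (s : ℝ) * (∑ i ∈ Finset.Icc 1 l, r i)) / ((s : ℝ) - (l : ℝ))
            - φ * (s : ℝ) * (l : ℝ)}
        (-((s : ℝ) * ((s : ℝ) - 1) * (Δr / 2 + φ))) := by
      constructor
      · refine ⟨s - 1, by omega, by omega, ?_⟩
        have hlN : s - 1 ≤ N := by omega
        have hne : s - 1 ≠ s := by omega
        rw [hval (s-1) hlN hne]
        have hcast : ((s - 1 : ℕ) : ℝ) = (s : ℝ) - 1 := by
          push_cast [Nat.cast_sub hs1]; ring
        rw [hcast]
        have hd : (s : ℝ) - ((s : ℝ) - 1) ≠ 0 := by ring_nf; norm_num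
        field_simp
        ring
      · rintro y ⟨l, hl1, hls, rfl⟩
        have hlN : l ≤ N := by omega
        have hne : l ≠ s := by omega
        rw [hval l hlN hne]
        have hls' : (l : ℝ) < (s : ℝ) := by exact_mod_cast hls
        have hd : (s : ℝ) - (l : ℝ) ≠ 0 := by linarith
        have key : Δr * (s : ℝ) * (l : ℝ) * ((l : ℝ) - (s : ℝ)) / 2 / ((s : ℝ) - (l : ℝ))
            = -(Δr * (s : ℝ) * (l : ℝ) / 2) := by
          field_simp; ring
        rw [key]
        have hl1' : (1 : ℝ) ≤ (l : ℝ) := by exact_mod_cast hl1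
        have hls1 : (l : ℝ) ≤ (s : ℝ) - 1 := by
          have : (l : ℝ) + 1 ≤ (s : ℝ) := by exact_mod_cast hls
          linarith
        have hspos : (0 : ℝ) < (s : ℝ) := by positivity
        nlinarith [mul_pos hspos hc]
    rw [Bminus, hleast.csInf_eq]
    field_simp
    ring
  · -- Bplus
    have hleast : IsLeast {y : ℝ | ∃ l : ℕ, s < l ∧ l ≤ N ∧
        y = ((l : ℝ) * (∑ i ∈ Finset.Icc 1 s, r i)
              - (s : ℝ) * (∑ i ∈ Finset.Icc 1 l, r i)) / ((l : ℝ) - (s : ℝ))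
            + φ * (s : ℝ) * (l : ℝ)}
        ((s : ℝ) * ((s : ℝ) + 1) * (Δr / 2 + φ)) := by
      constructor
      · refine ⟨s + 1, by omega, hsN', ?_⟩
        rw [hval (s+1) hsN' (by omega)]
        push_cast
        have hd : ((s : ℝ) + 1) - (s : ℝ) ≠ 0 := by ring_nf; norm_num
        field_simp
      · rintro y ⟨l, hls, hlN, rfl⟩
        rw [hval l hlN (by omega)]
        have hls' : (s : ℝ) < (l : ℝ) := by exact_mod_cast hls
        have hd : (l : ℝ) - (s : ℝ) ≠ 0 := by linarith
        have key : Δr * (s : ℝ) * (l : ℝ) * ((l : ℝ) - (s : ℝ)) / 2 / ((l : ℝ) - (s : ℝ))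
            = Δr * (s : ℝ) * (l : ℝ) / 2 := by
          field_simp
        rw [key]
        have hls1 : (s : ℝ) + 1 ≤ (l : ℝ) := by exact_mod_cast hls
        have hspos : (0 : ℝ) < (s : ℝ) := by positivity
        nlinarith [mul_pos hspos hc]
    rw [Bplus, hleast.csInf_eq]
    field_simp
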